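/- There exist a constant c > 0 and N₀ ∈ ℕ such that for every integer n ≥ N₀ and every ε with n^{−1/3} < ε < 1/2, there exists an n-point set X ⊂ ℝ with the following property: every finite multiset D of points in ℝ (points with positive integer multiplicities) that satisfies cost_p(D,{y}) ∈ [(1−ε)·cost_p(X,{y}), (1+ε)·cost_p(X,{y})] for every p ∈ {1,…,n} and every center y ∈ ℝ must have at least c·ε^{−1/2}·log n distinct points. -/

import Mathlib

/-- `topP p s` is the sum of the `p` largest entries of the multiset `s` of reals. -/
noncomputable def topP (p : ℕ) (s : Multiset ℝ) : ℝ :=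
  (((s.sort (· ≤ ·)).reverse).take p).sum

/-- The p-Centrum objective with one facility `y ∈ ℝ`: the sum of the `p` largest
distances `|x - y|` over the points of the multiset `s`, counted with multiplicity. -/
noncomputable def cost1 (p : ℕ) (s : Multiset ℝ) (y : ℝ) : ℝ :=
  topP p (s.map fun x => |x - y|)

/-! ### Generic machinery for top-p sums of a multiset -/

noncomputable def descList (s : Multiset ℝ) : List ℝ := (s.sort (· ≤ ·)).reverse

lemma descList_sorted (s : Multiset ℝ) : (descList s).Pairwise (· ≥ ·) := by
  have h := Multiset.pairwise_sort s (· ≤ ·)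
  simpa [descList, List.pairwise_reverse] using h

lemma descList_perm (s : Multiset ℝ) : (descList s : Multiset ℝ) = s := by
  simp [descList]

lemma topP_eq (p : ℕ) (s : Multiset ℝ) : topP p s = ((descList s).take p).sum := rfl

/-- If `L` is sorted descending, then `topP` of its coercion is a prefix sum. -/
lemma topP_coe_of_sorted (L : List ℝ) (hL : L.Pairwise (· ≥ ·)) (p : ℕ) :
    topP p (L : Multiset ℝ) = (L.take p).sum := by
  have h1 : descList (L : Multiset ℝ) = L := by
    have hperm : (descList (L : Multiset ℝ)).Perm L := by
      have := descList_perm (L : Multiset ℝ)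
      exact Multiset.coe_eq_coe.mp this
    refine List.Perm.eq_of_pairwise' (descList_sorted _) hL hperm
  rw [topP_eq, h1]

noncomputable def stepF (s : Multiset ℝ) (q : ℕ) : ℝ := (descList s).getD q 0

lemma topP_succ (p : ℕ) (s : Multiset ℝ) : topP (p+1) s = topP p s + stepF s p := by
  rw [topP_eq, topP_eq, stepF]
  rcases lt_or_ge p (descList s).length with h | h
  · rw [List.sum_take_succ _ p h, List.getD_eq_getElem _ _ h]
  · rw [List.take_of_length_le h, List.take_of_length_le (by omega),
      List.getD_eq_default _ _ h, add_zero]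

lemma stepF_mem {s : Multiset ℝ} {q : ℕ} (h : stepF s q ≠ 0) : stepF s q ∈ s := by
  rcases lt_or_ge q (descList s).length with h' | h'
  · have he : stepF s q = (descList s)[q] := List.getD_eq_getElem _ _ h'
    have hm : (descList s)[q] ∈ descList s := List.getElem_mem h'
    have hm2 : (descList s)[q] ∈ (descList s : Multiset ℝ) := by exact_mod_cast hm
    rw [descList_perm s] at hm2
    rw [he]; exact hm2
  · exact absurd (List.getD_eq_default _ _ h') h

lemma stepF_nonneg {s : Multiset ℝ} (hs : ∀ x ∈ s, 0 ≤ x) (q : ℕ) : 0 ≤ stepF s q := by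
  rcases eq_or_ne (stepF s q) 0 with h | h
  · rw [h]
  · exact hs _ (stepF_mem h)

lemma stepF_anti {s : Multiset ℝ} (hs : ∀ x ∈ s, 0 ≤ x) {q q' : ℕ} (h : q ≤ q') :
    stepF s q' ≤ stepF s q := by
  rcases lt_or_ge q' (descList s).length with h' | h'
  · have hq : q < (descList s).length := lt_of_le_of_lt h h'
    rw [stepF, stepF, List.getD_eq_getElem _ _ h', List.getD_eq_getElem _ _ hq]
    rcases eq_or_lt_of_le h with rfl | hlt
    · exact le_refl _
    · exact List.pairwise_iff_getElem.mp (descList_sorted s) q q' hq h' hlt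
  · rw [stepF, List.getD_eq_default _ _ h']
    exact stepF_nonneg hs q

lemma topP_ge_mul {s : Multiset ℝ} (hs : ∀ x ∈ s, 0 ≤ x) (p : ℕ) :
    (p : ℝ) * stepF s p ≤ topP p s := by
  induction p with
  | zero => simp [topP]
  | succ k ih =>
    rw [topP_succ]
    have h1 : stepF s (k+1) ≤ stepF s k := stepF_anti hs (by omega)
    have h2 : (k : ℝ) * stepF s (k+1) ≤ (k:ℝ) * stepF s k := by
      apply mul_le_mul_of_nonneg_left h1 (by positivity)
    push_cast
    nlinarith [ih, stepF_nonneg hs k]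

lemma topP_le_add {s : Multiset ℝ} (hs : ∀ x ∈ s, 0 ≤ x) (a k : ℕ) :
    topP (a + k) s ≤ topP a s + (k : ℝ) * stepF s a := by
  induction k with
  | zero => simp
  | succ j ih =>
    have : a + (j+1) = (a+j) + 1 := by omega
    rw [this, topP_succ]
    have h1 : stepF s (a+j) ≤ stepF s a := stepF_anti hs (by omega)
    push_cast
    nlinarith

/-- If there is no strict decrease of the step function on `[a, a+2h-1)`, then the
top-p sums are linear there. -/
lemma topP_linear {s : Multiset ℝ} (hs : ∀ x ∈ s, 0 ≤ x) (a h : ℕ)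
    (hno : ∀ q, a ≤ q → q + 1 ≤ a + 2*h - 1 → ¬ stepF s (q+1) < stepF s q) (hh : 1 ≤ h) :
    topP a s + topP (a + 2*h) s = 2 * topP (a + h) s := by
  have key : ∀ k, k ≤ 2*h → topP (a + k) s = topP a s + (k:ℝ) * stepF s a := by
    intro k hk
    induction k with
    | zero => simp
    | succ j ih =>
      have hj : j ≤ 2*h := by omega
      have heq : stepF s (a+j) = stepF s a := by
        clear ih
        induction j with
        | zero => rfl
        | succ l ihl =>
          have hl : l ≤ 2*h := by omega
          have h1 : ¬ stepF s (a+l+1) < stepF s (a+l) := hno (a+l) (by omega) (by omega)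
          have h2 : stepF s (a+l+1) ≤ stepF s (a+l) := stepF_anti hs (by omega)
          have h3 : stepF s (a+l+1) = stepF s (a+l) := le_antisymm h2 (not_lt.mp h1)
          rw [show a + (l+1) = a + l + 1 by omega, h3, ihl (by omega) (by omega)]
      have : a + (j+1) = (a+j) + 1 := by omega
      rw [this, topP_succ, ih hj, heq]
      push_cast; ring
  have k1 := key h (by omega)
  have k2 := key (2*h) (le_refl _)
  rw [k1, k2]
  push_cast; ring

/-! ### Counting distinct points -/

lemma card_ge_of_values (D : Multiset ℝ) (A : Finset ℕ) (v : ℕ → ℝ)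
    (hmem : ∀ q ∈ A, v q ∈ Multiset.map abs D) (hinj : Set.InjOn v ↑A) :
    A.card ≤ D.toFinset.card := by
  have h1 : A.card ≤ ((Multiset.map abs D).toFinset).card := by
    apply Finset.card_le_card_of_injOn v _ hinj
    intro q hq
    rw [Finset.mem_coe, Multiset.mem_toFinset]
    exact hmem q hq
  calc A.card ≤ ((Multiset.map abs D).toFinset).card := h1
    _ = (D.toFinset.image abs).card := by rw [Multiset.toFinset_map]
    _ ≤ D.toFinset.card := Finset.card_image_le

lemma card_ge_of_decreases (D : Multiset ℝ) (A : Finset ℕ)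
    (hdec : ∀ q ∈ A, stepF (Multiset.map abs D) (q+1) < stepF (Multiset.map abs D) q) :
    A.card ≤ D.toFinset.card := by
  set s := Multiset.map abs D with hsdef
  have hs : ∀ x ∈ s, 0 ≤ x := by
    intro x hx
    rw [hsdef, Multiset.mem_map] at hx
    obtain ⟨d, _, rfl⟩ := hx
    exact abs_nonneg d
  apply card_ge_of_values D A (stepF s)
  · intro q hq
    have h1 : 0 ≤ stepF s (q+1) := stepF_nonneg hs _
    have h2 : stepF s q ≠ 0 := by
      have := hdec q hq; intro h; rw [h] at this; linarith
    exact stepF_mem h2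
  · intro q hq q' hq' hne
    by_contra h
    rcases Nat.lt_or_ge q q' with hlt | hge
    · have : stepF s q' ≤ stepF s (q+1) := stepF_anti hs (by omega)
      have := hdec q (by exact_mod_cast hq)
      linarith [hne ▸ this]
    · have hlt : q' < q := by omega
      have : stepF s q ≤ stepF s (q'+1) := stepF_anti hs (by omega)
      have := hdec q' (by exact_mod_cast hq')
      linarith [hne ▸ this]

/-! ### The hard instance X -/

def tB (i : ℕ) : ℕ := 1024 ^ i

def PP (i : ℕ) : ℕ := ∑ j ∈ Finset.range i, tB (j+1)

noncomputable def Bc (m i : ℕ) : ℝ := 256 ^ m / 256 ^ i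

noncomputable def blockL (m i : ℕ) : List ℝ :=
  (List.range (tB i)).map (fun j : ℕ => Bc m i * (2 - (j : ℝ) / (tB i)))

noncomputable def fillL (k : ℕ) : List ℝ :=
  (List.range k).map (fun j : ℕ => (1 : ℝ) / ((j : ℝ) + 2))

noncomputable def Blk (m i : ℕ) : List ℝ :=
  (List.range i).flatMap (fun i' => blockL m (i'+1))

noncomputable def LX (m k : ℕ) : List ℝ := Blk m m ++ fillL k

lemma tB_pos (i : ℕ) : 0 < tB i := Nat.pow_pos (by norm_num)

lemma Bc_pos (m i : ℕ) : 0 < Bc m i := by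
  unfold Bc; positivity

lemma Bc_succ (m i : ℕ) : Bc m (i+1) = Bc m i / 256 := by
  unfold Bc; rw [pow_succ]; ring

lemma Bc_ge_one {m i : ℕ} (h : i ≤ m) : 1 ≤ Bc m i := by
  unfold Bc
  rw [le_div_iff₀ (by positivity), one_mul]
  exact_mod_cast pow_le_pow_right₀ (by norm_num) h

lemma blockL_length (m i : ℕ) : (blockL m i).length = tB i := by
  simp [blockL]

lemma mem_blockL {m i : ℕ} {x : ℝ} (hx : x ∈ blockL m i) :
    Bc m i < x ∧ x ≤ 2 * Bc m i := by
  simp only [blockL, List.mem_map, List.mem_range] at hx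
  obtain ⟨j, hj, rfl⟩ := hx
  have ht : (0:ℝ) < tB i := by exact_mod_cast tB_pos i
  have hj' : (j:ℝ) ≤ (tB i : ℝ) - 1 := by
    have : (j:ℝ) + 1 ≤ (tB i : ℝ) := by exact_mod_cast hj
    linarith
  have h1 : (j:ℝ) / (tB i) < 1 := by
    rw [div_lt_one ht]; exact_mod_cast hj
  have h2 : 0 ≤ (j:ℝ) / (tB i) := by positivity
  constructor
  · have hB := Bc_pos m i
    nlinarith
  · have hB := Bc_pos m i
    nlinarith

lemma blockL_sorted (m i : ℕ) : (blockL m i).Pairwise (· > ·) := by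
  unfold blockL
  refine List.Pairwise.map _ ?_ (List.pairwise_lt_range)
  intro a b hab
  have ht : (0:ℝ) < tB i := by exact_mod_cast tB_pos i
  have hB := Bc_pos m i
  have hab' : (a:ℝ) < (b:ℝ) := by exact_mod_cast hab
  have : (a:ℝ)/(tB i) < (b:ℝ)/(tB i) := by
    apply div_lt_div_of_pos_right hab' ht
  nlinarith

lemma fillL_sorted (k : ℕ) : (fillL k).Pairwise (· > ·) := by
  unfold fillL
  refine List.Pairwise.map _ ?_ (List.pairwise_lt_range)
  intro a b hab
  have : (0:ℝ) < (a:ℝ) + 2 := by positivity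
  apply div_lt_div_of_pos_left one_pos this
  exact_mod_cast by omega

lemma mem_fillL {k : ℕ} {x : ℝ} (hx : x ∈ fillL k) : 0 < x ∧ x ≤ 1/2 := by
  simp only [fillL, List.mem_map, List.mem_range] at hx
  obtain ⟨j, hj, rfl⟩ := hx
  have : (0:ℝ) < (j:ℝ) + 2 := by positivity
  constructor
  · positivity
  · rw [div_le_div_iff₀ this (by norm_num)]
    have : (0:ℝ) ≤ (j:ℝ) := by positivity
    linarith

lemma Blk_succ (m i : ℕ) : Blk m (i+1) = Blk m i ++ blockL m (i+1) := by
  unfold Blk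
  rw [List.range_succ, List.flatMap_append]
  simp

lemma Blk_length (m i : ℕ) : (Blk m i).length = PP i := by
  induction i with
  | zero => simp [Blk, PP]
  | succ j ih =>
    rw [Blk_succ, List.length_append, ih, blockL_length]
    show PP j + tB (j+1) = PP (j+1)
    rw [PP, PP, Finset.sum_range_succ]

lemma mem_Blk {m i : ℕ} {x : ℝ} (hx : x ∈ Blk m i) :
    ∃ j, 1 ≤ j ∧ j ≤ i ∧ x ∈ blockL m j := by
  simp only [Blk, List.mem_flatMap, List.mem_range] at hx
  obtain ⟨i', hi', hx⟩ := hx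
  exact ⟨i'+1, by omega, by omega, hx⟩

lemma blockL_gt {m i j : ℕ} (hij : i < j) (hjm : j ≤ m) {x y : ℝ}
    (hx : x ∈ blockL m i) (hy : y ∈ blockL m j) : y < x := by
  have h1 := (mem_blockL hx).1
  have h2 := (mem_blockL hy).2
  have hij' : i + 1 ≤ j := hij
  have hpos := Bc_pos m j
  have hle : Bc m j ≤ Bc m (i+1) := by
    unfold Bc
    apply div_le_div_of_nonneg_left (by positivity) (by positivity)
    exact_mod_cast pow_le_pow_right₀ (by norm_num) hij'
  have : Bc m (i+1) = Bc m i / 256 := Bc_succ m i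
  nlinarith [Bc_pos m i]

lemma Blk_sorted (m : ℕ) : ∀ i ≤ m, (Blk m i).Pairwise (· > ·) := by
  intro i him
  induction i with
  | zero => simp [Blk]
  | succ j ih =>
    rw [Blk_succ]
    rw [List.pairwise_append]
    refine ⟨ih (by omega), blockL_sorted m (j+1), ?_⟩
    intro x hx y hy
    obtain ⟨l, hl1, hl2, hxl⟩ := mem_Blk hx
    exact blockL_gt (by omega) (by omega) hxl hy

lemma LX_sorted (m k : ℕ) : (LX m k).Pairwise (· > ·) := by
  unfold LX
  rw [List.pairwise_append]
  refine ⟨Blk_sorted m m le_rfl, fillL_sorted k, ?_⟩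
  intro x hx y hy
  obtain ⟨l, hl1, hl2, hxl⟩ := mem_Blk hx
  have h1 := (mem_blockL hxl).1
  have h2 := (mem_fillL hy).2
  have h3 := Bc_ge_one (m := m) (i := l) hl2
  linarith

lemma LX_pos {m k : ℕ} {x : ℝ} (hx : x ∈ LX m k) : 0 < x := by
  unfold LX at hx
  rw [List.mem_append] at hx
  rcases hx with hx | hx
  · obtain ⟨l, hl1, hl2, hxl⟩ := mem_Blk hx
    have := (mem_blockL hxl).1
    linarith [Bc_pos m l]
  · exact (mem_fillL hx).1

lemma LX_length (m k : ℕ) : (LX m k).length = PP m + k := by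
  unfold LX
  rw [List.length_append, Blk_length]
  simp [fillL]

lemma LX_nodup (m k : ℕ) : (LX m k).Nodup := by
  have h := LX_sorted m k
  rw [List.Nodup]
  exact List.Pairwise.imp (fun h => ne_of_gt h) h

lemma LX_sorted_ge (m k : ℕ) : (LX m k).Pairwise (· ≥ ·) := by
  exact List.Pairwise.imp (fun h => le_of_lt h) (LX_sorted m k)

/-! ### Cost formulas for X -/

lemma list_sum_range (f : ℕ → ℝ) (q : ℕ) :
    ((List.range q).map f).sum = ∑ j ∈ Finset.range q, f j := by
  induction q with
  | zero => simp
  | succ j ih => rw [List.range_succ, List.map_append, List.sum_append,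
      Finset.sum_range_succ, ih]; simp

lemma sum_range_id_real (q : ℕ) :
    (∑ j ∈ Finset.range q, (j:ℝ)) = q * (q-1) / 2 := by
  induction q with
  | zero => simp
  | succ j ih =>
    rw [Finset.sum_range_succ, ih]
    push_cast
    ring

lemma blockL_take_sum (m i q : ℕ) (hq : q ≤ tB i) :
    ((blockL m i).take q).sum = Bc m i * (2*q - q*(q-1)/(2*(tB i))) := by
  unfold blockL
  rw [← List.map_take, List.take_range, min_eq_left hq, list_sum_range]
  have ht : (0:ℝ) < tB i := by exact_mod_cast tB_pos i
  have heq : ∑ j ∈ Finset.range q, Bc m i * (2 - (j:ℝ)/(tB i))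
       = Bc m i * (2*q - (∑ j ∈ Finset.range q, (j:ℝ))/(tB i)) := by
    rw [← Finset.mul_sum]
    congr 1
    rw [Finset.sum_sub_distrib, Finset.sum_const, Finset.card_range, ← Finset.sum_div]
    push_cast; ring
  rw [heq, sum_range_id_real]
  field_simp

lemma blockL_sum (m i : ℕ) :
    (blockL m i).sum = Bc m i * (2*(tB i) - ((tB i:ℝ)-1)/2) := by
  have h := blockL_take_sum m i (tB i) le_rfl
  rw [List.take_of_length_le (le_of_eq (blockL_length m i))] at h
  rw [h]
  have ht : (0:ℝ) < tB i := by exact_mod_cast tB_pos i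
  field_simp

noncomputable def M4 (m i : ℕ) : ℝ := 256^m * 4^i

lemma M4_pos (m i : ℕ) : 0 < M4 m i := by unfold M4; positivity

lemma M4_succ (m i : ℕ) : M4 m (i+1) = 4 * M4 m i := by unfold M4; ring

lemma tB_Bc (m i : ℕ) : (tB i : ℝ) * Bc m i = M4 m i := by
  unfold tB Bc M4
  push_cast
  have : (1024:ℝ)^i = 256^i * 4^i := by rw [← mul_pow]; norm_num
  field_simp [this]
  linear_combination this

lemma blockL_sum_le (m i : ℕ) : (blockL m i).sum ≤ 2 * M4 m i := by
  rw [blockL_sum, ← tB_Bc]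
  have ht : (1:ℝ) ≤ tB i := by exact_mod_cast tB_pos i
  have hB := Bc_pos m i
  nlinarith

lemma blockL_sum_ge (m i : ℕ) : (3/2) * M4 m i ≤ (blockL m i).sum := by
  rw [blockL_sum, ← tB_Bc]
  have ht : (1:ℝ) ≤ tB i := by exact_mod_cast tB_pos i
  have hB := Bc_pos m i
  nlinarith

lemma Blk_sum_le (m : ℕ) : ∀ i, (Blk m i).sum ≤ (2/3) * M4 m (i+1) := by
  intro i
  induction i with
  | zero =>
    simp [Blk]
    unfold M4; positivity
  | succ j ih =>
    rw [Blk_succ, List.sum_append]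
    have h1 := blockL_sum_le m (j+1)
    have h2 : M4 m (j+2) = 4 * M4 m (j+1) := M4_succ m (j+1)
    linarith

lemma Blk_sum_nonneg (m i : ℕ) : 0 ≤ (Blk m i).sum := by
  apply List.sum_nonneg
  intro x hx
  obtain ⟨l, _, _, hxl⟩ := mem_Blk hx
  linarith [(mem_blockL hxl).1, Bc_pos m l]

lemma Blk_prefix (m : ℕ) : ∀ i j, i ≤ j → ∃ s, Blk m j = Blk m i ++ s := by
  intro i j hij
  induction j, hij using Nat.le_induction with
  | base => exact ⟨[], by simp⟩
  | succ j hij ih =>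
    obtain ⟨s, hs⟩ := ih
    exact ⟨s ++ blockL m (j+1), by rw [Blk_succ, hs, List.append_assoc]⟩

noncomputable def cX (m k p : ℕ) : ℝ := ((LX m k).take p).sum

lemma cX_block (m k i q : ℕ) (him : i < m) (hq : q ≤ tB (i+1)) :
    cX m k (PP i + q) = (Blk m i).sum + Bc m (i+1) * (2*q - q*(q-1)/(2*(tB (i+1)))) := by
  obtain ⟨s, hs⟩ := Blk_prefix m (i+1) m him
  rw [Blk_succ] at hs
  unfold cX LX
  rw [hs, List.append_assoc, List.append_assoc]
  have hlen : PP i = (Blk m i).length := (Blk_length m i).symm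
  rw [hlen, List.take_length_add_append, List.sum_append]
  congr 1
  rw [List.take_append_of_le_length (by rw [blockL_length]; exact hq)]
  exact blockL_take_sum m (i+1) q hq

lemma cX_P (m k : ℕ) (i : ℕ) (him : i ≤ m) : cX m k (PP i) = (Blk m i).sum := by
  unfold cX LX
  obtain ⟨s, hs⟩ := Blk_prefix m i m him
  rw [hs, List.append_assoc]
  have hlen : PP i = (Blk m i).length := (Blk_length m i).symm
  rw [hlen, List.take_left]

/-! ### X as a Finset; cost identification -/

noncomputable def XF (m k : ℕ) : Finset ℝ := (LX m k).toFinset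

lemma XF_card (m k : ℕ) : (XF m k).card = PP m + k := by
  rw [XF, List.toFinset_card_of_nodup (LX_nodup m k), LX_length]

lemma XF_val (m k : ℕ) : (XF m k).val = (LX m k : Multiset ℝ) := by
  rw [XF, List.toFinset, Multiset.toFinset_val]
  exact Multiset.dedup_eq_self.mpr (by exact_mod_cast LX_nodup m k)

lemma cost1_XF (m k p : ℕ) : cost1 p (XF m k).val 0 = cX m k p := by
  rw [cost1, XF_val]
  have h1 : Multiset.map (fun x => |x - 0|) (LX m k : Multiset ℝ) = (LX m k : Multiset ℝ) := by
    rw [Multiset.map_coe]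
    congr 1
    have : ∀ x ∈ LX m k, |x - 0| = id x := by
      intro x hx
      rw [sub_zero, id, abs_of_pos (LX_pos hx)]
    rw [List.map_congr_left this, List.map_id]
  rw [h1, topP_coe_of_sorted _ (LX_sorted_ge m k)]
  rfl

lemma cost1_D0 (p : ℕ) (D : Multiset ℝ) : cost1 p D 0 = topP p (Multiset.map abs D) := by
  rw [cost1]
  congr 1
  apply Multiset.map_congr rfl
  intro x _
  rw [sub_zero]

/-! ### Arithmetic facts about PP -/

lemma PP_succ (i : ℕ) : PP (i+1) = PP i + tB (i+1) := Finset.sum_range_succ _ _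

lemma PP_mono {i j : ℕ} (h : i ≤ j) : PP i ≤ PP j := by
  unfold PP
  exact Finset.sum_le_sum_of_subset (Finset.range_subset_range.mpr h)

lemma tB_le_PP {j : ℕ} (h : 1 ≤ j) : tB j ≤ PP j := by
  obtain ⟨i, rfl⟩ := Nat.exists_eq_add_of_le h
  calc tB (1+i) ≤ PP i + tB (i+1) := by rw [Nat.add_comm 1 i]; omega
    _ = PP (i+1) := (PP_succ i).symm
    _ = PP (1+i) := by rw [Nat.add_comm]

lemma PP_lt_pow (i : ℕ) : 1023 * PP i + 1024 ≤ 1024 ^ (i+1) := by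
  induction i with
  | zero => simp [PP]
  | succ j ih =>
    rw [PP_succ]
    have : tB (j+1) = 1024^(j+1) := rfl
    rw [pow_succ]
    nlinarith [ih]

lemma cX_nonneg (m k p : ℕ) : 0 ≤ cX m k p := by
  apply List.sum_nonneg
  intro x hx
  exact le_of_lt (LX_pos (List.mem_of_mem_take hx))

lemma Bc_mono {m : ℕ} {i j : ℕ} (h : i ≤ j) : Bc m j ≤ Bc m i := by
  unfold Bc
  apply div_le_div_of_nonneg_left (by positivity) (by positivity)
  exact_mod_cast pow_le_pow_right₀ (by norm_num) h

lemma pow1024_cast (i : ℕ) : ((tB i : ℕ) : ℝ) = (1024:ℝ)^i := by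
  unfold tB; push_cast; ring

lemma log_le_7 (n : ℕ) (m : ℕ) (hnm : n < 1024^(m+2)) (hn : 1 ≤ n) :
    Real.log n ≤ 7 * (m + 2) := by
  have h1 : (n:ℝ) ≤ (1024:ℝ)^(m+2) := by exact_mod_cast le_of_lt hnm
  have h2 : Real.log n ≤ Real.log ((1024:ℝ)^(m+2)) :=
    Real.log_le_log (by exact_mod_cast hn) h1
  have h3 : Real.log ((1024:ℝ)^(m+2)) = (m+2) * Real.log 1024 := by
    rw [Real.log_pow]; push_cast; ring
  have h4 : Real.log (1024:ℝ) = 10 * Real.log 2 := by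
    rw [show (1024:ℝ) = 2^10 by norm_num, Real.log_pow]; push_cast; ring
  have h5 := Real.log_two_lt_d9
  have : Real.log (1024:ℝ) ≤ 7 := by rw [h4]; nlinarith
  calc Real.log n ≤ (m+2) * Real.log 1024 := by rw [← h3]; exact h2
    _ ≤ (m+2) * 7 := by
        apply mul_le_mul_of_nonneg_left this (by positivity)
    _ = 7 * (m+2) := by ring

noncomputable def hceil (ε : ℝ) (j : ℕ) : ℕ :=
  ⌈(4:ℝ) * Real.sqrt ε * ((tB (j+1) : ℕ) : ℝ)⌉₊

lemma hceil_pos (ε : ℝ) (hε0 : 0 < ε) (j : ℕ) : 1 ≤ hceil ε j := by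
  apply Nat.ceil_pos.mpr
  have htR : (0:ℝ) < ((tB (j+1):ℕ):ℝ) := by exact_mod_cast tB_pos (j+1)
  have := Real.sqrt_pos.mpr hε0
  positivity

lemma hceil_Kh (ε : ℝ) (hε0 : 0 < ε) (hε2 : ε < 1/2) (j K : ℕ)
    (hgt : (1:ℝ) ≤ ε * ((tB (j+1) : ℕ) : ℝ))
    (hK_le : (K:ℝ) ≤ (Real.sqrt ε)⁻¹/10) : 2*K*(hceil ε j) ≤ tB (j+1) := by
  set rtε := Real.sqrt ε with hrtdef
  have hrt0 : 0 < rtε := Real.sqrt_pos.mpr hε0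
  have hrtsq : rtε * rtε = ε := Real.mul_self_sqrt hε0.le
  have hrtle1 : rtε ≤ 1 := by nlinarith
  have htR : (0:ℝ) < ((tB (j+1):ℕ):ℝ) := by exact_mod_cast tB_pos (j+1)
  have hrt_t : 1 ≤ rtε * ((tB (j+1):ℕ):ℝ) := by nlinarith
  have hh_hi : (hceil ε j : ℝ) ≤ 5*rtε*((tB (j+1):ℕ):ℝ) := by
    have hcl := Nat.ceil_lt_add_one (show (0:ℝ) ≤ 4*rtε*((tB (j+1):ℕ):ℝ) by positivity)
    have : (hceil ε j : ℝ) < 4*rtε*((tB (j+1):ℕ):ℝ) + 1 := hcl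
    linarith
  have hc : ((2*K*(hceil ε j) : ℕ) : ℝ) ≤ ((tB (j+1):ℕ):ℝ) := by
    push_cast
    have h1 : (K:ℝ) * (hceil ε j : ℝ) ≤ (rtε⁻¹/10) * (5*rtε*((tB (j+1):ℕ):ℝ)) :=
      mul_le_mul hK_le hh_hi (by positivity) (by positivity)
    have h2 : (rtε⁻¹/10) * (5*rtε*((tB (j+1):ℕ):ℝ)) = ((tB (j+1):ℕ):ℝ)/2 := by
      field_simp
      ring
    nlinarith
  exact_mod_cast hc

set_option maxHeartbeats 1000000 in
lemma triple_dec (m k : ℕ) (ε : ℝ) (hε0 : 0 < ε) (hε2 : ε < 1/2) (s : Multiset ℝ)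
    (hs : ∀ x ∈ s, 0 ≤ x)
    (hF : ∀ p, p ≤ PP m → (1-ε) * cX m k p ≤ topP p s ∧ topP p s ≤ (1+ε) * cX m k p)
    (j r K : ℕ)
    (hgt : (1:ℝ) ≤ ε * ((tB (j+1) : ℕ) : ℝ))
    (hjm : j + 1 ≤ m)
    (hrK : r < K)
    (hK_le : (K:ℝ) ≤ (Real.sqrt ε)⁻¹/10) :
    ∃ q, PP j + 2*r*(hceil ε j) ≤ q ∧ q + 1 ≤ PP j + 2*r*(hceil ε j) + 2*(hceil ε j) - 1 ∧
      stepF s (q+1) < stepF s q := by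
  set rtε := Real.sqrt ε with hrtdef
  have hrt0 : 0 < rtε := Real.sqrt_pos.mpr hε0
  have hrtsq : rtε * rtε = ε := Real.mul_self_sqrt hε0.le
  have hrtle1 : rtε ≤ 1 := by nlinarith
  have htpos : 0 < tB (j+1) := tB_pos (j+1)
  have htR : (0:ℝ) < ((tB (j+1):ℕ):ℝ) := by exact_mod_cast htpos
  have hh_lo : 4*rtε*((tB (j+1):ℕ):ℝ) ≤ (hceil ε j : ℝ) := Nat.le_ceil _
  have hrt_t : 1 ≤ rtε * ((tB (j+1):ℕ):ℝ) := by nlinarith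
  have hh_hi : (hceil ε j : ℝ) ≤ 5*rtε*((tB (j+1):ℕ):ℝ) := by
    have hcl := Nat.ceil_lt_add_one (show (0:ℝ) ≤ 4*rtε*((tB (j+1):ℕ):ℝ) by positivity)
    have : (hceil ε j : ℝ) < 4*rtε*((tB (j+1):ℕ):ℝ) + 1 := hcl
    linarith
  have hh_pos : 1 ≤ hceil ε j := Nat.ceil_pos.mpr (by positivity)
  have hKh : 2*K*(hceil ε j) ≤ tB (j+1) := by
    have hc : ((2*K*(hceil ε j) : ℕ) : ℝ) ≤ ((tB (j+1):ℕ):ℝ) := by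
      push_cast
      have h1 : (K:ℝ) * (hceil ε j : ℝ) ≤ (rtε⁻¹/10) * (5*rtε*((tB (j+1):ℕ):ℝ)) :=
        mul_le_mul hK_le hh_hi (by positivity) (by positivity)
      have h2 : (rtε⁻¹/10) * (5*rtε*((tB (j+1):ℕ):ℝ)) = ((tB (j+1):ℕ):ℝ)/2 := by
        field_simp
        ring
      nlinarith
    exact_mod_cast hc
  have hq3 : 2*r*(hceil ε j) + 2*(hceil ε j) ≤ tB (j+1) := by
    have h1 : 2*(r+1) ≤ 2*K := by omega
    have h2 : 2*(r+1)*(hceil ε j) ≤ 2*K*(hceil ε j) := Nat.mul_le_mul_right _ h1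
    calc 2*r*(hceil ε j) + 2*(hceil ε j) = 2*(r+1)*(hceil ε j) := by ring
      _ ≤ 2*K*(hceil ε j) := h2
      _ ≤ tB (j+1) := hKh
  by_contra hno
  push_neg at hno
  have hlin := topP_linear hs (PP j + 2*r*(hceil ε j)) (hceil ε j)
    (fun q hq1 hq2 => not_lt.mpr (hno q hq1 hq2)) hh_pos
  have hjm' : j < m := by omega
  have e1 := cX_block m k j (2*r*(hceil ε j)) hjm' (by omega)
  have e2 := cX_block m k j (2*r*(hceil ε j) + (hceil ε j)) hjm' (by omega)
  have e3 := cX_block m k j (2*r*(hceil ε j) + 2*(hceil ε j)) hjm' (by omega)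
  have hple : PP j + (2*r*(hceil ε j) + 2*(hceil ε j)) ≤ PP m := by
    have hps := PP_succ j
    have hpm := PP_mono (show j+1 ≤ m by omega)
    omega
  have f1 := hF (PP j + 2*r*(hceil ε j)) (by omega)
  have f2 := hF (PP j + (2*r*(hceil ε j) + (hceil ε j))) (by omega)
  have f3 := hF (PP j + (2*r*(hceil ε j) + 2*(hceil ε j))) (by omega)
  rw [add_assoc, add_assoc] at hlin
  have hBpos : 0 < Bc m (j+1) := Bc_pos m (j+1)
  have hMeq : ((tB (j+1):ℕ):ℝ) * Bc m (j+1) = M4 m (j+1) := tB_Bc m (j+1)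
  have hcst_le : (Blk m j).sum ≤ (2/3) * M4 m (j+1) := Blk_sum_le m j
  have hcst_nn : 0 ≤ (Blk m j).sum := Blk_sum_nonneg m j
  have hMpos : 0 < M4 m (j+1) := M4_pos m (j+1)
  set Q : ℝ := ((2*r*(hceil ε j) : ℕ) : ℝ) with hQdef
  set H : ℝ := ((hceil ε j : ℕ) : ℝ) with hHdef
  have hQ0 : 0 ≤ Q := by positivity
  have hH1 : 1 ≤ H := by rw [hHdef]; exact_mod_cast hh_pos
  have hQHt : Q + 2*H ≤ ((tB (j+1):ℕ):ℝ) := by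
    rw [hQdef, hHdef]
    push_cast
    exact_mod_cast hq3
  have e1' : cX m k (PP j + 2*r*(hceil ε j))
      = (Blk m j).sum + Bc m (j+1) * (2*Q - Q*(Q-1)/(2*((tB (j+1):ℕ):ℝ))) := by
    rw [e1]
  have e2' : cX m k (PP j + (2*r*(hceil ε j) + (hceil ε j)))
      = (Blk m j).sum + Bc m (j+1) * (2*(Q+H) - (Q+H)*((Q+H)-1)/(2*((tB (j+1):ℕ):ℝ))) := by
    rw [e2]
    congr 2
    rw [hQdef, hHdef]
    push_cast
    ring
  have e3' : cX m k (PP j + (2*r*(hceil ε j) + 2*(hceil ε j)))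
      = (Blk m j).sum + Bc m (j+1) * (2*(Q+2*H) - (Q+2*H)*((Q+2*H)-1)/(2*((tB (j+1):ℕ):ℝ))) := by
    rw [e3]
    congr 2
    rw [hQdef, hHdef]
    push_cast
    ring
  have hiden : cX m k (PP j + 2*r*(hceil ε j)) + cX m k (PP j + (2*r*(hceil ε j) + 2*(hceil ε j)))
      = 2 * cX m k (PP j + (2*r*(hceil ε j) + (hceil ε j)))
        - Bc m (j+1) * H^2 / ((tB (j+1):ℕ):ℝ) := by
    rw [e1', e2', e3']
    field_simp
    ring
  have hcX2le : cX m k (PP j + (2*r*(hceil ε j) + (hceil ε j))) ≤ (8/3) * M4 m (j+1) := by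
    rw [e2']
    have hd_nn : 0 ≤ (Q+H)*((Q+H)-1)/(2*((tB (j+1):ℕ):ℝ)) :=
      div_nonneg (mul_nonneg (by linarith) (by linarith)) (by linarith)
    have h1 : Bc m (j+1) * (2*(Q+H) - (Q+H)*((Q+H)-1)/(2*((tB (j+1):ℕ):ℝ)))
        ≤ Bc m (j+1) * (2*(Q+H)) :=
      mul_le_mul_of_nonneg_left (by linarith) hBpos.le
    have h2 : Bc m (j+1) * (2*(Q+H)) ≤ Bc m (j+1) * (2*((tB (j+1):ℕ):ℝ)) :=
      mul_le_mul_of_nonneg_left (by linarith) hBpos.le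
    nlinarith
  have hH2 : 16 * ε * ((tB (j+1):ℕ):ℝ)^2 ≤ H^2 := by
    have h0 : (0:ℝ) ≤ 4*rtε*((tB (j+1):ℕ):ℝ) := by positivity
    have hs2 := mul_le_mul hh_lo hh_lo h0 (le_trans h0 hh_lo)
    calc 16 * ε * ((tB (j+1):ℕ):ℝ)^2
        = (4*rtε*((tB (j+1):ℕ):ℝ)) * (4*rtε*((tB (j+1):ℕ):ℝ)) := by rw [← hrtsq]; ring
      _ ≤ H * H := hs2
      _ = H^2 := by ring
  have hG : 16 * ε * M4 m (j+1) ≤ Bc m (j+1) * H^2 / ((tB (j+1):ℕ):ℝ) := by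
    rw [le_div_iff₀ htR]
    have hx : Bc m (j+1) * (16*ε*((tB (j+1):ℕ):ℝ)^2)
        = 16*ε*M4 m (j+1)*((tB (j+1):ℕ):ℝ) := by rw [← hMeq]; ring
    have hy := mul_le_mul_of_nonneg_left hH2 hBpos.le
    linarith
  have hGnn : 0 ≤ Bc m (j+1) * H^2 / ((tB (j+1):ℕ):ℝ) := by positivity
  have c1 := f1.2
  have c2 := f2.1
  have c3 := f3.2
  have hεM : 0 < ε * M4 m (j+1) := mul_pos hε0 hMpos
  have h4ε : 4 * (ε * cX m k (PP j + (2*r*(hceil ε j) + (hceil ε j))))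
      ≤ 4*(ε * ((8/3) * M4 m (j+1))) := by
    have := mul_le_mul_of_nonneg_left hcX2le hε0.le
    linarith
  have hidenε : ε * (cX m k (PP j + 2*r*(hceil ε j))
        + cX m k (PP j + (2*r*(hceil ε j) + 2*(hceil ε j))))
      = ε * (2 * cX m k (PP j + (2*r*(hceil ε j) + (hceil ε j)))
        - Bc m (j+1) * H^2 / ((tB (j+1):ℕ):ℝ)) := by rw [hiden]
  linarith [c1, c2, c3, hlin, hiden, hidenε, hG, h4ε, hεM, mul_nonneg hε0.le hGnn]

set_option maxHeartbeats 1000000 in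
lemma main_bound (n : ℕ) (hn : 1024^12 ≤ n) (ε : ℝ)
    (hε1 : (n:ℝ) ^ (-(1/3:ℝ)) < ε) (hε2 : ε < 1/2) :
    ∃ X : Finset ℝ, X.card = n ∧
      ∀ D : Multiset ℝ,
        (∀ p : ℕ, 1 ≤ p → p ≤ n → ∀ y : ℝ,
          cost1 p D y ∈ Set.Icc ((1 - ε) * cost1 p X.val y) ((1 + ε) * cost1 p X.val y)) →
        (1/1120) * ε ^ (-(1/2:ℝ)) * Real.log n ≤ (D.toFinset.card : ℝ) := by
  have hn0 : 0 < n := lt_of_lt_of_le (by positivity) hn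
  have hε0 : 0 < ε := lt_trans (Real.rpow_pos_of_pos (by exact_mod_cast hn0) _) hε1
  set lg := Nat.log 1024 n with hlgdef
  have hlg : 12 ≤ lg := (Nat.le_log_iff_pow_le (by norm_num) (by omega)).mpr hn
  set m := lg - 1 with hmdef
  have hm10 : 10 ≤ m := by omega
  have hm1 : m + 1 = lg := by omega
  have hnm : n < 1024^(m+2) := by
    have := Nat.lt_pow_succ_log_self (b := 1024) (by norm_num) n
    have h2 : (Nat.log 1024 n).succ = m + 2 := by omega
    rwa [h2] at this
  have hPPm : PP m + 1 ≤ n := by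
    have h1 := PP_lt_pow m
    have h2 : 1024^(m+1) ≤ n := by
      have := Nat.pow_log_le_self 1024 (x := n) (by omega)
      rwa [← hlgdef, ← hm1] at this
    omega
  set k := n - PP m with hkdef
  refine ⟨XF m k, by rw [XF_card]; omega, ?_⟩
  intro D hD
  set s := Multiset.map abs D with hsdef
  have hs : ∀ x ∈ s, 0 ≤ x := by
    intro x hx
    rw [hsdef, Multiset.mem_map] at hx
    obtain ⟨d, _, rfl⟩ := hx
    exact abs_nonneg d
  -- the two-sided bounds at center 0
  have hF : ∀ p, p ≤ PP m →
      (1-ε) * cX m k p ≤ topP p s ∧ topP p s ≤ (1+ε) * cX m k p := by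
    intro p hp
    rcases Nat.eq_zero_or_pos p with rfl | hp1
    · have h1 : topP 0 s = 0 := by simp [topP]
      have h2 : cX m k 0 = 0 := by simp [cX]
      rw [h1, h2]; norm_num
    · have := hD p hp1 (by omega) 0
      rw [cost1_XF, cost1_D0, Set.mem_Icc] at this
      exact this
  -- `E` is `ε ^ (-(1/2))`
  set rtε := Real.sqrt ε with hrtdef
  have hrt0 : 0 < rtε := Real.sqrt_pos.mpr hε0
  have hrtsq : rtε * rtε = ε := Real.mul_self_sqrt hε0.le
  have hE : ε ^ (-(1/2:ℝ)) = rtε⁻¹ := by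
    rw [Real.rpow_neg hε0.le, hrtdef, Real.sqrt_eq_rpow]
  have hrtle1 : rtε ≤ 1 := by nlinarith
  have hεrt : ε ≤ rtε := by nlinarith
  have hlog_pos : 0 < Real.log n := by
    apply Real.log_pos
    have : (2:ℕ) ≤ n := by omega
    exact_mod_cast by omega
  have hlog7 : Real.log n ≤ 7 * (m + 2) := log_le_7 n m hnm (by omega)
  -- window bounds
  have window : ∀ i, i + 2 ≤ m →
      Bc m (i+2) / 12 ≤ stepF s (PP (i+1)) ∧ stepF s (PP (i+1)) ≤ 1024 * Bc m (i+2) := by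
    intro i him
    have hat : PP (i+1) + tB (i+2) = PP (i+2) := (PP_succ (i+1)).symm
    have h1 : topP (PP (i+1) + tB (i+2)) s ≤ topP (PP (i+1)) s
        + (tB (i+2) : ℝ) * stepF s (PP (i+1)) := topP_le_add hs _ _
    have h2 : (1-ε) * cX m k (PP (i+2)) ≤ topP (PP (i+2)) s :=
      (hF _ (PP_mono (by omega))).1
    have h3 : topP (PP (i+1)) s ≤ (1+ε) * cX m k (PP (i+1)) :=
      (hF _ (PP_mono (by omega))).2
    rw [hat] at h1
    rw [cX_P m k (i+2) (by omega)] at h2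
    rw [cX_P m k (i+1) (by omega)] at h3
    have hsum : (Blk m (i+2)).sum = (Blk m (i+1)).sum + (blockL m (i+2)).sum := by
      rw [Blk_succ, List.sum_append]
    have hS_ge := blockL_sum_ge m (i+2)
    have hc_le : (Blk m (i+1)).sum ≤ (2/3) * M4 m (i+2) := Blk_sum_le m (i+1)
    have hc_nn := Blk_sum_nonneg m (i+1)
    have htB : (tB (i+2) : ℝ) * Bc m (i+2) = M4 m (i+2) := tB_Bc m (i+2)
    have ht_pos : (0:ℝ) < (tB (i+2) : ℝ) := by exact_mod_cast tB_pos (i+2)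
    have hM4 := M4_pos m (i+2)
    have hBc := Bc_pos m (i+2)
    constructor
    · have key : M4 m (i+2) / 12 ≤ (tB (i+2) : ℝ) * stepF s (PP (i+1)) := by
        nlinarith
      rw [← htB] at key
      by_contra hcon
      push_neg at hcon
      have hx : (tB (i+2) : ℝ) * stepF s (PP (i+1)) < (tB (i+2) : ℝ) * (Bc m (i+2)/12) :=
        mul_lt_mul_of_pos_left hcon ht_pos
      nlinarith
    · have h4 : (PP (i+1) : ℝ) * stepF s (PP (i+1)) ≤ topP (PP (i+1)) s :=
        topP_ge_mul hs _
      have ha_ge : (1024:ℝ)^(i+1) ≤ (PP (i+1) : ℝ) := by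
        rw [← pow1024_cast]
        exact_mod_cast tB_le_PP (by omega)
      have ha_pos : (0:ℝ) < (PP (i+1) : ℝ) := by
        have := pow_pos (show (0:ℝ) < 1024 by norm_num) (i+1)
        linarith
      have hM4eq : M4 m (i+2) = (1024:ℝ)^(i+1) * (1024 * Bc m (i+2)) := by
        rw [← htB, pow1024_cast, pow_succ]
        ring
      have hstep_nn : 0 ≤ stepF s (PP (i+1)) := stepF_nonneg hs _
      -- a * step ≤ (1+ε) c* ≤ M4 = 1024^(i+1) * (1024Bc) ≤ a * (1024 Bc)
      have hchain : (PP (i+1) : ℝ) * stepF s (PP (i+1)) ≤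
          (PP (i+1) : ℝ) * (1024 * Bc m (i+2)) := by
        calc (PP (i+1) : ℝ) * stepF s (PP (i+1)) ≤ (1+ε) * (Blk m (i+1)).sum := le_trans h4 h3
          _ ≤ (3/2) * ((2/3) * M4 m (i+2)) :=
              mul_le_mul (by linarith) hc_le hc_nn (by norm_num)
          _ = M4 m (i+2) := by ring
          _ = (1024:ℝ)^(i+1) * (1024 * Bc m (i+2)) := hM4eq
          _ ≤ (PP (i+1) : ℝ) * (1024 * Bc m (i+2)) :=
              mul_le_mul_of_nonneg_right ha_ge (by positivity)
      exact le_of_mul_le_mul_left hchain ha_pos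
  -- good-block threshold
  set i₀ := (m+4)/3 with hi0def
  have hi0_3 : m + 2 ≤ 3 * i₀ := by omega
  have hi0m : i₀ ≤ m := by omega
  have hi02 : 2 ≤ i₀ := by omega
  have hgood : ∀ j, i₀ - 1 ≤ j → (1:ℝ) ≤ ε * ((tB (j+1) : ℕ) : ℝ) := by
    intro j hj
    have h1 : (n:ℝ) ≤ (1024:ℝ)^(3*i₀) := by
      calc (n:ℝ) ≤ (1024:ℝ)^(m+2) := by exact_mod_cast hnm.le
        _ ≤ (1024:ℝ)^(3*i₀) := by
            apply pow_le_pow_right₀ (by norm_num) hi0_3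
    have h2 : (n:ℝ)^((1:ℝ)/3) ≤ (1024:ℝ)^(i₀) := by
      have hx : ((1024:ℝ)^(3*i₀)) = ((1024:ℝ)^(i₀))^(3:ℕ) := by
        rw [← pow_mul, Nat.mul_comm]
      calc (n:ℝ)^((1:ℝ)/3) ≤ ((1024:ℝ)^(3*i₀))^((1:ℝ)/3) :=
            Real.rpow_le_rpow (by positivity) h1 (by norm_num)
        _ = (1024:ℝ)^(i₀) := by
            rw [hx, ← Real.rpow_natCast ((1024:ℝ)^(i₀)) 3, ← Real.rpow_mul (by positivity)]
            norm_num
    have hnR : (0:ℝ) < (n:ℝ) := by exact_mod_cast hn0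
    have h3 : 1 < ε * (n:ℝ)^((1:ℝ)/3) := by
      have := mul_lt_mul_of_pos_right hε1 (Real.rpow_pos_of_pos hnR ((1:ℝ)/3))
      rwa [← Real.rpow_add hnR, (by norm_num : -(1/3:ℝ) + 1/3 = 0), Real.rpow_zero] at this
    have h4 : (1024:ℝ)^(i₀) ≤ ((tB (j+1):ℕ) : ℝ) := by
      rw [pow1024_cast]
      apply pow_le_pow_right₀ (by norm_num) (by omega)
    have h5 : ε * (n:ℝ)^((1:ℝ)/3) ≤ ε * ((tB (j+1):ℕ):ℝ) :=
      mul_le_mul_of_nonneg_left (le_trans h2 h4) hε0.le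
    linarith
  rw [hE]
  by_cases hsm : ε ≤ 1/400
  -- SMALL ε : triple-decrease counting
  · set K := ⌊rtε⁻¹/10⌋₊ with hKdef
    have hK_le : (K:ℝ) ≤ rtε⁻¹/10 := Nat.floor_le (by positivity)
    have hrt20 : (20:ℝ) ≤ rtε⁻¹ := by
      have hle : rtε ≤ 1/20 := by
        rw [hrtdef]
        calc Real.sqrt ε ≤ Real.sqrt (1/400) := Real.sqrt_le_sqrt hsm
          _ = 1/20 := by
              rw [show (1/400:ℝ) = (1/20)^2 by norm_num, Real.sqrt_sq (by norm_num)]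
      calc (20:ℝ) = (1/20 : ℝ)⁻¹ := by norm_num
        _ ≤ rtε⁻¹ := inv_anti₀ hrt0 hle
    have hK2 : rtε⁻¹/20 ≤ (K:ℝ) := by
      have hfl := Nat.lt_floor_add_one (rtε⁻¹/10)
      have hK10 : rtε⁻¹/10 - 1 ≤ (K:ℝ) := by
        rw [hKdef]; linarith
      linarith
    set A := (Finset.Icc (i₀-1) (m-1)) ×ˢ (Finset.range K) with hAdef
    have hmemA : ∀ e : ℕ × ℕ, e ∈ A ↔ (i₀-1 ≤ e.1 ∧ e.1 ≤ m-1) ∧ e.2 < K := by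
      intro e
      rw [hAdef, Finset.mem_product, Finset.mem_Icc, Finset.mem_range]
    have hchoice : ∀ e : ℕ × ℕ, e ∈ A → ∃ q, PP e.1 + 2*e.2*(hceil ε e.1) ≤ q ∧
        q + 1 ≤ PP e.1 + 2*e.2*(hceil ε e.1) + 2*(hceil ε e.1) - 1 ∧
        stepF s (q+1) < stepF s q := by
      intro e he
      rw [hmemA] at he
      exact triple_dec m k ε hε0 hε2 s hs hF e.1 e.2 K (hgood e.1 he.1.1) (by omega) he.2 hK_le
    classical
    set qc : ℕ × ℕ → ℕ := fun e => if he : e ∈ A then (hchoice e he).choose else 0 with hqcdef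
    have hqc : ∀ e ∈ A, PP e.1 + 2*e.2*(hceil ε e.1) ≤ qc e ∧
        qc e + 1 ≤ PP e.1 + 2*e.2*(hceil ε e.1) + 2*(hceil ε e.1) - 1 ∧
        stepF s (qc e + 1) < stepF s (qc e) := by
      intro e he
      rw [hqcdef]
      simp only [dif_pos he]
      exact (hchoice e he).choose_spec
    have horder : ∀ e ∈ A, ∀ e' ∈ A,
        (e.1 < e'.1 ∨ (e.1 = e'.1 ∧ e.2 < e'.2)) → qc e < qc e' := by
      intro e he e' he' hlt
      obtain ⟨b1, b2, _⟩ := hqc e he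
      obtain ⟨b1', _, _⟩ := hqc e' he'
      have hp1 := hceil_pos ε hε0 e.1
      have hKh := hceil_Kh ε hε0 hε2 e.1 K (hgood e.1 ((hmemA e).mp he).1.1) hK_le
      rcases hlt with hlt | ⟨heq, hlt⟩
      · have hrK : e.2 < K := ((hmemA e).mp he).2
        have h1 : 2*e.2*(hceil ε e.1) + 2*(hceil ε e.1) ≤ 2*K*(hceil ε e.1) := by
          have h0 : 2*(e.2+1) ≤ 2*K := by omega
          calc 2*e.2*(hceil ε e.1) + 2*(hceil ε e.1) = 2*(e.2+1)*(hceil ε e.1) := by ring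
            _ ≤ 2*K*(hceil ε e.1) := Nat.mul_le_mul_right _ h0
        have h2 : PP e.1 + tB (e.1+1) = PP (e.1+1) := (PP_succ e.1).symm
        have h3 : PP (e.1+1) ≤ PP e'.1 := PP_mono (by omega)
        omega
      · rw [← heq] at b1'
        have h1 : 2*e.2*(hceil ε e.1) + 2*(hceil ε e.1) ≤ 2*e'.2*(hceil ε e.1) := by
          have h0 : 2*(e.2+1) ≤ 2*e'.2 := by omega
          calc 2*e.2*(hceil ε e.1) + 2*(hceil ε e.1) = 2*(e.2+1)*(hceil ε e.1) := by ring
            _ ≤ 2*e'.2*(hceil ε e.1) := Nat.mul_le_mul_right _ h0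
        omega
    have hinj : Set.InjOn qc ↑A := by
      intro e he e' he' heq
      rw [Finset.mem_coe] at he he'
      by_contra hne
      rcases lt_trichotomy e.1 e'.1 with h | h | h
      · have := horder e he e' he' (Or.inl h); omega
      · rcases lt_trichotomy e.2 e'.2 with h2 | h2 | h2
        · have := horder e he e' he' (Or.inr ⟨h, h2⟩); omega
        · exact hne (Prod.ext h h2)
        · have := horder e' he' e he (Or.inr ⟨h.symm, h2⟩); omega
      · have := horder e' he' e he (Or.inl h); omega
    have hdecA : ∀ q ∈ A.image qc, stepF s (q+1) < stepF s q := by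
      intro q hq
      rw [Finset.mem_image] at hq
      obtain ⟨e, he, rfl⟩ := hq
      exact (hqc e he).2.2
    have hcard1 : (A.image qc).card ≤ D.toFinset.card := by
      rw [hsdef] at hdecA
      exact card_ge_of_decreases D (A.image qc) hdecA
    have hcard2 : (A.image qc).card = A.card := Finset.card_image_of_injOn hinj
    have hcardA : A.card = (m - i₀ + 1) * K := by
      rw [hAdef, Finset.card_product, Nat.card_Icc, Finset.card_range]
      congr 1
      omega
    have hDge : ((m - i₀ + 1 : ℕ):ℝ) * (K:ℝ) ≤ (D.toFinset.card : ℝ) := by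
      have hx : ((m - i₀ + 1) * K : ℕ) ≤ D.toFinset.card := by omega
      exact_mod_cast hx
    have hmi : ((m - i₀ + 1 : ℕ):ℝ) = (m:ℝ) - (i₀:ℝ) + 1 := by
      push_cast [Nat.cast_sub hi0m]
      ring
    have hi0le : (i₀:ℝ) ≤ ((m:ℝ)+4)/3 := by
      rw [hi0def]
      calc ((((m+4)/3 : ℕ)):ℝ) ≤ ((m+4 : ℕ):ℝ)/((3:ℕ):ℝ) := Nat.cast_div_le
        _ = ((m:ℝ)+4)/3 := by push_cast; ring
    have hm2 : (2:ℝ) ≤ (m:ℝ) := by exact_mod_cast (by omega : 2 ≤ m)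
    have hfac1 : (m:ℝ)/2 ≤ ((m - i₀ + 1 : ℕ):ℝ) := by
      rw [hmi]
      linarith
    have hlog14 : Real.log n ≤ 14 * (m:ℝ) := by
      have : 7*((m:ℝ)+2) ≤ 14*m := by linarith
      linarith
    have hrtinv_pos : 0 < rtε⁻¹ := inv_pos.mpr hrt0
    have hprod : (m:ℝ)/2 * (rtε⁻¹/20) ≤ ((m - i₀ + 1 : ℕ):ℝ) * (K:ℝ) :=
      mul_le_mul hfac1 hK2 (by positivity) (by positivity)
    have hfin : (1/1120)*rtε⁻¹*Real.log n ≤ (m:ℝ)/2 * (rtε⁻¹/20) := by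
      have h1 : rtε⁻¹ * Real.log n ≤ rtε⁻¹ * (14*m) :=
        mul_le_mul_of_nonneg_left hlog14 hrtinv_pos.le
      nlinarith [hrtinv_pos, hm2]
    linarith
  -- LARGE ε : window counting
  · push_neg at hsm
    set L := m/2 with hLdef
    have hblk : ∀ j, j < L → 2*j + 2 ≤ m := by omega
    have hwin : ∀ j, j < L → Bc m (2*j+2)/12 ≤ stepF s (PP (2*j+1)) ∧
        stepF s (PP (2*j+1)) ≤ 1024 * Bc m (2*j+2) := by
      intro j hj
      exact window (2*j) (hblk j hj)
    have hmem : ∀ j ∈ Finset.range L, stepF s (PP (2*j+1)) ∈ Multiset.map abs D := by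
      intro j hj
      rw [Finset.mem_range] at hj
      rw [← hsdef]
      apply stepF_mem
      have h1 := (hwin j hj).1
      have hB := Bc_pos m (2*j+2)
      intro h0
      rw [h0] at h1
      linarith
    have hinj : Set.InjOn (fun j => stepF s (PP (2*j+1))) ↑(Finset.range L) := by
      have key : ∀ a b, a < b → b < L → stepF s (PP (2*b+1)) < stepF s (PP (2*a+1)) := by
        intro a b hab hbL
        have h1 := (hwin b hbL).2
        have h2 := (hwin a (by omega)).1
        have h3 : Bc m (2*b+2) ≤ Bc m (2*a+4) := Bc_mono (by omega)
        have h4 : Bc m (2*a+4) = Bc m (2*a+2) / 256 / 256 := by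
          rw [show 2*a+4 = (2*a+3)+1 by omega, Bc_succ, show 2*a+3 = (2*a+2)+1 by omega, Bc_succ]
        have hB := Bc_pos m (2*a+2)
        have hB2 := Bc_pos m (2*b+2)
        nlinarith
      intro a ha b hb heq
      rw [Finset.mem_coe, Finset.mem_range] at ha hb
      have heq' : stepF s (PP (2*a+1)) = stepF s (PP (2*b+1)) := heq
      by_contra hne
      rcases lt_trichotomy a b with h | h | h
      · have := key a b h hb; rw [heq'] at this; linarith
      · exact hne h
      · have := key b a h ha; rw [heq'] at this; linarith
    have hcard := card_ge_of_values D (Finset.range L) _ hmem hinj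
    rw [Finset.card_range] at hcard
    have hrtinv20 : rtε⁻¹ ≤ 20 := by
      have hle : 1/20 ≤ rtε := by
        rw [hrtdef]
        calc (1/20:ℝ) = Real.sqrt (1/400) := by
              rw [show (1/400:ℝ) = (1/20)^2 by norm_num, Real.sqrt_sq (by norm_num)]
          _ ≤ Real.sqrt ε := Real.sqrt_le_sqrt (by linarith)
      calc rtε⁻¹ ≤ (1/20:ℝ)⁻¹ := inv_anti₀ (by norm_num) hle
        _ = 20 := by norm_num
    have hL2 : ((m:ℝ) - 1)/2 ≤ (L:ℝ) := by
      have hx : m - 1 ≤ 2 * L := by omega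
      have h2 : ((m - 1 : ℕ):ℝ) ≤ 2*(L:ℝ) := by exact_mod_cast hx
      have h3 : ((m - 1 : ℕ):ℝ) = (m:ℝ) - 1 := by
        push_cast [Nat.cast_sub (by omega : 1 ≤ m)]
        ring
      rw [h3] at h2
      linarith
    have hm4 : (4:ℝ) ≤ (m:ℝ) := by exact_mod_cast (by omega : 4 ≤ m)
    have hLcard : (L:ℝ) ≤ (D.toFinset.card : ℝ) := by exact_mod_cast hcard
    have hrtinv_pos : 0 < rtε⁻¹ := inv_pos.mpr hrt0
    have hfin : (1/1120)*rtε⁻¹*Real.log n ≤ ((m:ℝ)-1)/2 := by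
      have h1 : rtε⁻¹ * Real.log n ≤ 20 * Real.log n :=
        mul_le_mul_of_nonneg_right hrtinv20 hlog_pos.le
      have hlog28 : Real.log n ≤ 28 * (((m:ℝ)-1)/2) := by
        have : 7*((m:ℝ)+2) ≤ 14*((m:ℝ)-1) := by linarith
        linarith
      nlinarith
    linarith

theorem stmt_14 :
    ∃ c : ℝ, 0 < c ∧ ∃ N₀ : ℕ,
      ∀ n : ℕ, N₀ ≤ n →
      ∀ ε : ℝ, (n : ℝ) ^ (-(1 / 3 : ℝ)) < ε → ε < 1 / 2 →
      ∃ X : Finset ℝ, X.card = n ∧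
        ∀ D : Multiset ℝ,
          (∀ p : ℕ, 1 ≤ p → p ≤ n → ∀ y : ℝ,
            cost1 p D y ∈ Set.Icc ((1 - ε) * cost1 p X.val y) ((1 + ε) * cost1 p X.val y)) →
          c * ε ^ (-(1 / 2 : ℝ)) * Real.log n ≤ (D.toFinset.card : ℝ) := by
  refine ⟨1/1120, by norm_num, 1024^12, ?_⟩
  intro n hn ε hε1 hε2
  exact main_bound n hn ε hε1 hε2
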